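/- For every x ∈ ℝ³ and every r > 0, the Lebesgue measure of the gauge ball B(x,r) equals (π²/2)·r⁴. -/

import Mathlib

noncomputable section

open MeasureTheory

/-- The underlying space of the Heisenberg group: `ℝ³`. -/
abbrev H3 : Type := ℝ × ℝ × ℝ

/-- The Heisenberg group law `(p,q,r)∗(p',q',r') = (p+p', q+q', r+r'+2(qp'−pq'))`. -/
def Hmul (x y : H3) : H3 :=
  (x.1 + y.1, x.2.1 + y.2.1, x.2.2 + y.2.2 + 2 * (x.2.1 * y.1 - x.1 * y.2.1))

/-- The inverse for the Heisenberg group law. -/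
def Hinv (x : H3) : H3 := (-x.1, -x.2.1, -x.2.2)

/-- The homogeneous (gauge) norm `‖(p,q,r)‖ = ((p²+q²)²+r²)^(1/4)`. -/
def Hnorm (x : H3) : ℝ := ((x.1 ^ 2 + x.2.1 ^ 2) ^ 2 + x.2.2 ^ 2) ^ ((1 : ℝ) / 4)

/-- The gauge distance `δ(x,y) = ‖x⁻¹∗y‖`. -/
def Hdist (x y : H3) : ℝ := Hnorm (Hmul (Hinv x) y)

/-- The gauge ball `B(x,r)`. -/
def Hball (x : H3) (r : ℝ) : Set H3 := {y | Hdist x y < r}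

/-- The dilation `λ∘(p,q,r) = (λp, λq, λ²r)`. -/
def Hdil (l : ℝ) (x : H3) : H3 := (l * x.1, l * x.2.1, l ^ 2 * x.2.2)

/-- A lattice point of `ℤ³` seen inside `ℝ³`. -/
def latticePt (k : ℤ × ℤ × ℤ) : H3 := ((k.1 : ℝ), (k.2.1 : ℝ), (k.2.2 : ℝ))

/-- The dyadic point `x_{j,k} = 2^{−j}∘k`. -/
def xjk (j : ℤ) (k : ℤ × ℤ × ℤ) : H3 := Hdil ((2 : ℝ) ^ (-j)) (latticePt k)

open Real Set intervalIntegral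


lemma vol_slice (c b : ℝ) :
    volume {t : ℝ | (t - c) ^ 2 < b} = ENNReal.ofReal (2 * Real.sqrt b) := by
  rcases le_or_gt b 0 with hb | hb
  · have h1 : {t : ℝ | (t - c) ^ 2 < b} = ∅ := by
      ext t
      simp only [mem_setOf_eq, mem_empty_iff_false, iff_false, not_lt]
      exact hb.trans (sq_nonneg _)
    rw [h1, measure_empty, Real.sqrt_eq_zero_of_nonpos hb]
    simp
  · have h1 : {t : ℝ | (t - c) ^ 2 < b} = Metric.ball c (Real.sqrt b) := by
      ext t
      simp only [mem_setOf_eq, Metric.mem_ball, Real.dist_eq]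
      rw [Real.lt_sqrt (abs_nonneg _), sq_abs]
    rw [h1, Real.volume_ball]


lemma int01 : ∫ t in (0:ℝ)..1, Real.sqrt (1 - t ^ 2) = π / 4 := by
  have hc : Continuous fun t : ℝ => Real.sqrt (1 - t ^ 2) := by fun_prop
  have hsplit := intervalIntegral.integral_add_adjacent_intervals
    (a := (-1:ℝ)) (b := 0) (c := 1) (μ := volume)
    (hc.intervalIntegrable _ _) (hc.intervalIntegrable _ _)
  have hneg := intervalIntegral.integral_comp_neg (a := (0:ℝ)) (b := 1)
    (fun t => Real.sqrt (1 - t ^ 2))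
  simp only [neg_zero, Even.neg_pow (even_two)] at hneg
  rw [integral_sqrt_one_sub_sq, ← hneg] at hsplit
  linarith

lemma int_sub (r : ℝ) (hr : 0 < r) :
    ∫ u in (0:ℝ)..r ^ 2, Real.sqrt (r ^ 4 - u ^ 2) = π / 4 * r ^ 4 := by
  have key := intervalIntegral.smul_integral_comp_mul_left (a := (0:ℝ)) (b := 1)
    (fun u => Real.sqrt (r ^ 4 - u ^ 2)) (r ^ 2)
  simp only [mul_zero, mul_one] at key
  rw [← key]
  have : ∀ t : ℝ, Real.sqrt (r ^ 4 - (r ^ 2 * t) ^ 2) = r ^ 2 * Real.sqrt (1 - t ^ 2) := by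
    intro t
    rw [show r ^ 4 - (r ^ 2 * t) ^ 2 = (r ^ 2) ^ 2 * (1 - t ^ 2) by ring,
      Real.sqrt_mul (sq_nonneg _), Real.sqrt_sq (by positivity)]
  simp only [this, intervalIntegral.integral_const_mul, int01, smul_eq_mul]
  ring

lemma int_interval (r : ℝ) (hr : 0 < r) :
    ∫ ρ in (0:ℝ)..r, ρ * (2 * Real.sqrt (r ^ 4 - ρ ^ 4)) = π / 4 * r ^ 4 := by
  have h1 : ∫ ρ in (0:ℝ)..r, ρ * (2 * Real.sqrt (r ^ 4 - ρ ^ 4))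
      = ∫ x in (0:ℝ)..r, ((fun u => Real.sqrt (r ^ 4 - u ^ 2)) ∘ (fun x => x ^ 2)) x
          * (2 * x) := by
    apply intervalIntegral.integral_congr
    intro x _
    simp only [Function.comp_apply]
    rw [show (x ^ 2) ^ 2 = x ^ 4 by ring]
    ring
  rw [h1, intervalIntegral.integral_comp_mul_deriv
    (f := fun x => x ^ 2) (f' := fun x => 2 * x)
    (fun x _ => by simpa using (hasDerivAt_pow 2 x)) (by fun_prop) (by fun_prop)]
  simp only [ne_eq, OfNat.ofNat_ne_zero, not_false_eq_true, zero_pow]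
  rw [int_sub r hr]

lemma int_rho (r : ℝ) (hr : 0 < r) :
    ∫ ρ in Ioi (0:ℝ), ρ * (2 * Real.sqrt (r ^ 4 - ρ ^ 4)) = π / 4 * r ^ 4 := by
  have hc : Continuous fun ρ : ℝ => ρ * (2 * Real.sqrt (r ^ 4 - ρ ^ 4)) := by fun_prop
  have hzero : ∀ ρ ∈ Ioi r, ρ * (2 * Real.sqrt (r ^ 4 - ρ ^ 4)) = 0 := by
    intro ρ hρ
    have h4 : r ^ 4 - ρ ^ 4 ≤ 0 := by
      have : r ^ 4 ≤ ρ ^ 4 := pow_le_pow_left₀ hr.le (le_of_lt hρ) 4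
      linarith
    rw [Real.sqrt_eq_zero_of_nonpos h4]; ring
  have hunion : Ioc (0:ℝ) r ∪ Ioi r = Ioi 0 := Ioc_union_Ioi_eq_Ioi hr.le
  have hdisj : Disjoint (Ioc (0:ℝ) r) (Ioi r) := Ioc_disjoint_Ioi le_rfl
  have hint1 : IntegrableOn (fun ρ : ℝ => ρ * (2 * Real.sqrt (r ^ 4 - ρ ^ 4))) (Ioc 0 r) :=
    (hc.integrableOn_Icc (a := 0) (b := r)).mono_set Ioc_subset_Icc_self
  have hint2 : IntegrableOn (fun ρ : ℝ => ρ * (2 * Real.sqrt (r ^ 4 - ρ ^ 4))) (Ioi r) :=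
    (integrableOn_zero (s := Ioi r)).congr_fun (fun ρ hρ => (hzero ρ hρ).symm)
      measurableSet_Ioi
  rw [← hunion, setIntegral_union hdisj measurableSet_Ioi hint1 hint2,
    setIntegral_eq_zero_of_forall_eq_zero hzero, add_zero,
    ← intervalIntegral.integral_of_le hr.le]
  exact int_interval r hr

lemma radial (r : ℝ) (hr : 0 < r) :
    ∫ z : ℝ × ℝ, 2 * Real.sqrt (r ^ 4 - (z.1 ^ 2 + z.2 ^ 2) ^ 2) = π ^ 2 / 2 * r ^ 4 := by
  rw [← integral_comp_polarCoord_symm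
    (fun z : ℝ × ℝ => 2 * Real.sqrt (r ^ 4 - (z.1 ^ 2 + z.2 ^ 2) ^ 2))]
  have h1 : ∀ p : ℝ × ℝ,
      p.1 • (2 * Real.sqrt (r ^ 4 - (((polarCoord.symm p).1) ^ 2
        + ((polarCoord.symm p).2) ^ 2) ^ 2))
      = (fun ρ => ρ * (2 * Real.sqrt (r ^ 4 - ρ ^ 4))) p.1 * (fun _ : ℝ => (1:ℝ)) p.2 := by
    intro p
    have : ((polarCoord.symm p).1) ^ 2 + ((polarCoord.symm p).2) ^ 2 = p.1 ^ 2 := by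
      simp [polarCoord, mul_pow]
      rw [← mul_add, Real.cos_sq_add_sin_sq, mul_one]
    rw [this]
    simp only [smul_eq_mul, mul_one]
    ring_nf
  calc ∫ p in polarCoord.target,
        p.1 • (2 * Real.sqrt (r ^ 4 - (((polarCoord.symm p).1) ^ 2
          + ((polarCoord.symm p).2) ^ 2) ^ 2))
      = ∫ p in Ioi (0:ℝ) ×ˢ Ioo (-π) π,
          (fun ρ => ρ * (2 * Real.sqrt (r ^ 4 - ρ ^ 4))) p.1 * (fun _ : ℝ => (1:ℝ)) p.2 := by
        rw [polarCoord_target]; exact integral_congr_ae (Filter.Eventually.of_forall h1)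
    _ = (∫ ρ in Ioi (0:ℝ), ρ * (2 * Real.sqrt (r ^ 4 - ρ ^ 4))) * ∫ _ in Ioo (-π) π, (1:ℝ) := by
        rw [Measure.volume_eq_prod]
        exact setIntegral_prod_mul (fun ρ : ℝ => ρ * (2 * Real.sqrt (r ^ 4 - ρ ^ 4)))
          (fun _ : ℝ => (1:ℝ)) _ _
    _ = π ^ 2 / 2 * r ^ 4 := by
        rw [int_rho r hr]
        simp [Real.volume_Ioo]
        rw [max_eq_left (by positivity)]
        ring

/-- The Lebesgue measure of the gauge ball `B(x,r)` equals `(π²/2)·r⁴`. -/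
theorem heisenberg_ball_volume :
    ∀ x : H3, ∀ r : ℝ, 0 < r →
      (volume : Measure H3) (Hball x r) = ENNReal.ofReal (Real.pi ^ 2 / 2 * r ^ 4) := by
  rintro ⟨a, b, c⟩ r hr
  -- Step 1: describe the ball as a sublevel set
  have hset : Hball (a, b, c) r = {y : H3 |
      ((y.1 - a) ^ 2 + (y.2.1 - b) ^ 2) ^ 2
        + (y.2.2 - (c + 2 * b * y.1 - 2 * a * y.2.1)) ^ 2 < r ^ 4} := by
    ext y
    simp only [Hball, Hdist, Hmul, Hinv, Hnorm, mem_setOf_eq]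
    have harg : ((-a + y.1) ^ 2 + (-b + y.2.1) ^ 2) ^ 2
        + (-c + y.2.2 + 2 * (-b * y.1 - -a * y.2.1)) ^ 2
        = ((y.1 - a) ^ 2 + (y.2.1 - b) ^ 2) ^ 2
          + (y.2.2 - (c + 2 * b * y.1 - 2 * a * y.2.1)) ^ 2 := by ring
    rw [harg]
    set E : ℝ := ((y.1 - a) ^ 2 + (y.2.1 - b) ^ 2) ^ 2
      + (y.2.2 - (c + 2 * b * y.1 - 2 * a * y.2.1)) ^ 2 with hE
    have hE0 : 0 ≤ E := by positivity
    have hrr : r = (r ^ 4) ^ ((1 : ℝ) / 4) := by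
      rw [← Real.rpow_natCast r 4, ← Real.rpow_mul hr.le]
      norm_num
    rw [show E ^ ((1:ℝ)/4) < r ↔ E ^ ((1:ℝ)/4) < (r ^ 4) ^ ((1:ℝ)/4) by rw [← hrr]]
    rw [Real.rpow_lt_rpow_iff hE0 (by positivity) (by norm_num)]
  rw [hset]
  -- the nonnegative integrand on ℝ²
  set f : ℝ × ℝ → ℝ := fun z => 2 * Real.sqrt (r ^ 4 - (z.1 ^ 2 + z.2 ^ 2) ^ 2) with hf
  have hfc : Continuous f := by fun_prop
  have hS : MeasurableSet {y : H3 |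
      ((y.1 - a) ^ 2 + (y.2.1 - b) ^ 2) ^ 2
        + (y.2.2 - (c + 2 * b * y.1 - 2 * a * y.2.1)) ^ 2 < r ^ 4} := by
    apply (isOpen_lt (by fun_prop) continuous_const).measurableSet
  -- iterated integral via Fubini
  have step1 : (volume : Measure H3) {y : H3 |
      ((y.1 - a) ^ 2 + (y.2.1 - b) ^ 2) ^ 2
        + (y.2.2 - (c + 2 * b * y.1 - 2 * a * y.2.1)) ^ 2 < r ^ 4}
      = ∫⁻ y1 : ℝ, ∫⁻ y2 : ℝ,
          ENNReal.ofReal (2 * Real.sqrt (r ^ 4 - ((y1 - a) ^ 2 + (y2 - b) ^ 2) ^ 2)) := by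
    rw [Measure.volume_eq_prod, Measure.prod_apply hS]
    apply lintegral_congr
    intro y1
    have hS1 : MeasurableSet {z : ℝ × ℝ |
        ((y1 - a) ^ 2 + (z.1 - b) ^ 2) ^ 2
          + (z.2 - (c + 2 * b * y1 - 2 * a * z.1)) ^ 2 < r ^ 4} :=
      (isOpen_lt (by fun_prop) continuous_const).measurableSet
    have hpre : (Prod.mk y1 ⁻¹' {y : H3 |
        ((y.1 - a) ^ 2 + (y.2.1 - b) ^ 2) ^ 2
          + (y.2.2 - (c + 2 * b * y.1 - 2 * a * y.2.1)) ^ 2 < r ^ 4})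
        = {z : ℝ × ℝ | ((y1 - a) ^ 2 + (z.1 - b) ^ 2) ^ 2
          + (z.2 - (c + 2 * b * y1 - 2 * a * z.1)) ^ 2 < r ^ 4} := rfl
    rw [hpre, Measure.volume_eq_prod, Measure.prod_apply hS1]
    apply lintegral_congr
    intro y2
    have hpre2 : (Prod.mk y2 ⁻¹' {z : ℝ × ℝ |
        ((y1 - a) ^ 2 + (z.1 - b) ^ 2) ^ 2
          + (z.2 - (c + 2 * b * y1 - 2 * a * z.1)) ^ 2 < r ^ 4})
        = {t : ℝ | (t - (c + 2 * b * y1 - 2 * a * y2)) ^ 2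
            < r ^ 4 - ((y1 - a) ^ 2 + (y2 - b) ^ 2) ^ 2} := by
      ext t
      simp only [mem_preimage, mem_setOf_eq]
      constructor <;> intro h <;> linarith
    rw [hpre2, vol_slice]
  rw [step1]
  -- translation invariance in each variable
  have step2 : (∫⁻ y1 : ℝ, ∫⁻ y2 : ℝ,
      ENNReal.ofReal (2 * Real.sqrt (r ^ 4 - ((y1 - a) ^ 2 + (y2 - b) ^ 2) ^ 2)))
      = ∫⁻ u : ℝ, ∫⁻ v : ℝ, ENNReal.ofReal (f (u, v)) := by
    have inner : ∀ u : ℝ, (∫⁻ y2 : ℝ,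
        ENNReal.ofReal (2 * Real.sqrt (r ^ 4 - (u ^ 2 + (y2 - b) ^ 2) ^ 2)))
        = ∫⁻ v : ℝ, ENNReal.ofReal (f (u, v)) := by
      intro u
      exact lintegral_sub_right_eq_self
        (fun v => ENNReal.ofReal (2 * Real.sqrt (r ^ 4 - (u ^ 2 + v ^ 2) ^ 2))) b
    calc (∫⁻ y1 : ℝ, ∫⁻ y2 : ℝ,
        ENNReal.ofReal (2 * Real.sqrt (r ^ 4 - ((y1 - a) ^ 2 + (y2 - b) ^ 2) ^ 2)))
        = ∫⁻ y1 : ℝ, (fun u => ∫⁻ v : ℝ, ENNReal.ofReal (f (u, v))) (y1 - a) := by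
          apply lintegral_congr; intro y1; exact inner (y1 - a)
      _ = ∫⁻ u : ℝ, ∫⁻ v : ℝ, ENNReal.ofReal (f (u, v)) :=
          lintegral_sub_right_eq_self (fun u => ∫⁻ v : ℝ, ENNReal.ofReal (f (u, v))) a
  rw [step2]
  -- back to a single planar integral
  have step3 : (∫⁻ u : ℝ, ∫⁻ v : ℝ, ENNReal.ofReal (f (u, v)))
      = ∫⁻ z : ℝ × ℝ, ENNReal.ofReal (f z) := by
    rw [Measure.volume_eq_prod (α := ℝ) (β := ℝ)]
    exact (lintegral_prod _ ((ENNReal.continuous_ofReal.comp hfc).measurable.aemeasurable)).symm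
  rw [step3]
  -- compact support and integrability
  have hsupp : HasCompactSupport f := by
    apply HasCompactSupport.intro (isCompact_closedBall (0 : ℝ × ℝ) r)
    intro z hz
    have hz' : r < ‖z‖ := by simpa [Metric.mem_closedBall, dist_zero_right, not_le] using hz
    have hmax : r < max |z.1| |z.2| := by
      simpa [Prod.norm_def, Real.norm_eq_abs] using hz'
    have h2 : r ^ 2 < z.1 ^ 2 + z.2 ^ 2 := by
      rcases lt_max_iff.mp hmax with h | h
      · nlinarith [sq_abs z.1, sq_nonneg z.2, abs_nonneg z.1, hr]
      · nlinarith [sq_abs z.2, sq_nonneg z.1, abs_nonneg z.2, hr]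
    have h4 : r ^ 4 - (z.1 ^ 2 + z.2 ^ 2) ^ 2 < 0 := by nlinarith [sq_nonneg (z.1^2+z.2^2)]
    simp only [hf]
    rw [Real.sqrt_eq_zero_of_nonpos h4.le]
    ring
  have hint : Integrable f := hfc.integrable_of_hasCompactSupport hsupp
  have hnn : 0 ≤ᵐ[volume] f :=
    Filter.Eventually.of_forall (fun z => by positivity)
  rw [← ofReal_integral_eq_lintegral_ofReal hint hnn, hf]
  rw [radial r hr]
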